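/- Let G be a Polish group and φ, ψ : G → [0,∞]. Then U(φ) ⋄ U(ψ) ≥ φ ⋄ ψ pointwise, where (α ⋄ β)(x) = inf_{h∈G} α(h) + β(h⁻¹x) and U(·) denotes the least upper semi-continuous majorant modulo meagre sets. (Pettis theorem for graded subsets.) -/

import Mathlib

open scoped ENNReal

def GradedOpen {X : Type*} [TopologicalSpace X] (φ : X → ℝ≥0∞) : Prop :=
  ∀ r : ℝ≥0∞, IsOpen {x : X | φ x < r}

def LeAE {X : Type*} [TopologicalSpace X] (φ ψ : X → ℝ≥0∞) : Prop :=
  IsMeagre {x : X | ψ x < φ x}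

noncomputable def Ugr {X : Type*} [TopologicalSpace X] (φ : X → ℝ≥0∞) : X → ℝ≥0∞ :=
  fun x => ⨅ ψ : {ψ : X → ℝ≥0∞ // GradedOpen ψ ∧ LeAE φ ψ}, ψ.val x

/-- Infimal convolution of graded subsets of a group. -/
noncomputable def gconv {G : Type*} [Group G] (α β : G → ℝ≥0∞) : G → ℝ≥0∞ :=
  fun x => ⨅ h : G, α h + β (h⁻¹ * x)

/-- Key step: if `Ugr φ h < r` and `Ugr ψ (h⁻¹ * x) < s`, then there is a point `g`
with `φ g < r` and `ψ (g⁻¹ * x) < s`, by a Baire category argument. -/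
lemma pettis_key {G : Type*} [Group G] [TopologicalSpace G]
    [IsTopologicalGroup G] [BaireSpace G] (φ ψ : G → ℝ≥0∞) (x h : G) (r s : ℝ≥0∞)
    (hr : Ugr φ h < r) (hs : Ugr ψ (h⁻¹ * x) < s) :
    ∃ g : G, φ g < r ∧ ψ (g⁻¹ * x) < s := by
  rw [Ugr, iInf_lt_iff] at hr hs
  obtain ⟨⟨φ₁, hφ₁o, hφ₁le⟩, hφ₁⟩ := hr
  obtain ⟨⟨ψ₁, hψ₁o, hψ₁le⟩, hψ₁⟩ := hs
  -- the homeomorphism g ↦ g⁻¹ * x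
  set f : G → G := fun g => g⁻¹ * x with hf
  have hfc : Continuous f := (continuous_inv).mul continuous_const
  have hfo : IsOpenMap f := by
    have : f = (Homeomorph.mulRight x) ∘ (Homeomorph.inv G) := rfl
    rw [this]
    exact (Homeomorph.mulRight x).isOpenMap.comp (Homeomorph.inv G).isOpenMap
  -- the open set where things are small
  set U : Set G := {g | φ₁ g < r} ∩ f ⁻¹' {g | ψ₁ g < s} with hU
  have hUo : IsOpen U := (hφ₁o r).inter ((hψ₁o s).preimage hfc)
  have hUne : U.Nonempty := ⟨h, hφ₁, hψ₁⟩
  -- the meagre bad set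
  have hM : ({g : G | φ₁ g < φ g} ∪ f ⁻¹' {g : G | ψ₁ g < ψ g})ᶜ ∈ residual G := by
    rw [Set.compl_union]
    refine Filter.inter_mem hφ₁le ?_
    exact tendsto_residual_of_isOpenMap hfc hfo hψ₁le
  obtain ⟨g, hg1, hg2⟩ :=
    (dense_of_mem_residual hM).exists_mem_open hUo hUne
  rw [Set.compl_union, Set.mem_inter_iff] at hg1
  obtain ⟨hgφ, hgψ⟩ := hg1
  obtain ⟨hgU1, hgU2⟩ := hg2
  refine ⟨g, ?_, ?_⟩
  · exact lt_of_le_of_lt (not_lt.mp hgφ) hgU1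
  · exact lt_of_le_of_lt (not_lt.mp hgψ) hgU2

/-- Pettis theorem for graded subsets: `U(φ) ⋄ U(ψ) ⊑ φ ⋄ ψ`, i.e.
`U(φ) ⋄ U(ψ) ≥ φ ⋄ ψ` pointwise. -/
theorem pettis_graded {G : Type*} [Group G] [TopologicalSpace G]
    [IsTopologicalGroup G] [PolishSpace G] (φ ψ : G → ℝ≥0∞) :
    ∀ x : G, gconv φ ψ x ≤ gconv (Ugr φ) (Ugr ψ) x := by
  letI := TopologicalSpace.upgradeIsCompletelyMetrizable G
  intro x
  refine le_iInf fun h => ?_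
  set a := Ugr φ h
  set b := Ugr ψ (h⁻¹ * x)
  rcases eq_or_ne (a + b) ⊤ with htop | htop
  · simp [htop]
  have ha : a ≠ ⊤ := fun h' => htop (by simp [h'])
  have hb : b ≠ ⊤ := fun h' => htop (by simp [h'])
  refine ENNReal.le_of_forall_pos_le_add fun ε hε h' => ?_
  have hεne : (ε : ℝ≥0∞) ≠ 0 := by exact_mod_cast hε.ne'
  have hε2 : (0 : ℝ≥0∞) < (ε : ℝ≥0∞) / 2 := ENNReal.half_pos hεne
  have hr : a < a + (ε:ℝ≥0∞) / 2 := ENNReal.lt_add_right ha hε2.ne'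
  have hs : b < b + (ε:ℝ≥0∞) / 2 := ENNReal.lt_add_right hb hε2.ne'
  obtain ⟨g, hg1, hg2⟩ := pettis_key φ ψ x h (a + (ε:ℝ≥0∞) / 2) (b + (ε:ℝ≥0∞) / 2) hr hs
  calc gconv φ ψ x ≤ φ g + ψ (g⁻¹ * x) := iInf_le _ g
    _ ≤ (a + (ε:ℝ≥0∞) / 2) + (b + (ε:ℝ≥0∞) / 2) := add_le_add hg1.le hg2.le
    _ = a + b + ε := by
        rw [add_add_add_comm, ENNReal.add_halves]
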